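/- Let Y be a proper, connected, locally connected metric space on which a group G acts by isometries. Then for every y₀ ∈ Y and every D > 0 there exists M > 0 such that for every y in the orbit G • y₀, any two points of the open ball B(y, D) can be joined by a continuous path whose image is contained in the open ball B(y, M). -/

import Mathlib

open Metric Set

namespace Stmt12Aux

variable {Y : Type*} [MetricSpace Y]

/-- Chain of small connected open links along points `p 0, ..., p n` inside `W`. -/
def Chn (W : Set Y) (ε : ℝ) (n : ℕ) (p : ℕ → Y) (V : ℕ → Set Y) : Prop :=
  ∀ i < n, IsOpen (V i) ∧ IsPreconnected (V i) ∧ V i ⊆ W ∧ p i ∈ V i ∧ p (i+1) ∈ V i ∧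
    V i ⊆ ball (p i) ε ∧ V i ⊆ ball (p (i+1)) ε

lemma exists_conn_nbhd [LocallyConnectedSpace Y] {W : Set Y} {x : Y} (hW : W ∈ nhds x) :
    ∃ V : Set Y, IsOpen V ∧ IsPreconnected V ∧ x ∈ V ∧ V ⊆ W := by
  rcases (LocallyConnectedSpace.open_connected_basis x).mem_iff.1 hW with ⟨V, ⟨hVo, hxV, hVc⟩, hVW⟩
  exact ⟨V, hVo, hVc.isPreconnected, hxV, hVW⟩

/-- Append one link to a chain. -/
lemma Chn.append {W : Set Y} {ε : ℝ} {n : ℕ} {p : ℕ → Y} {V : ℕ → Set Y}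
    (h : Chn W ε n p V) {V₀ : Set Y} {w : Y}
    (h₀ : IsOpen V₀) (h₁ : IsPreconnected V₀) (h₂ : V₀ ⊆ W) (h₃ : p n ∈ V₀) (h₄ : w ∈ V₀)
    (h₅ : V₀ ⊆ ball (p n) ε) (h₆ : V₀ ⊆ ball w ε) :
    Chn W ε (n+1) (fun i => if i ≤ n then p i else w) (fun i => if i < n then V i else V₀) := by
  intro i hi
  rcases lt_or_ge i n with hin | hin
  · have e1 : (if i ≤ n then p i else w) = p i := if_pos hin.le
    have e2 : (if i + 1 ≤ n then p (i+1) else w) = p (i+1) := if_pos hin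
    simp only [e1, e2, if_pos hin]
    exact h i hin
  · have hin' : i = n := le_antisymm (Nat.lt_succ_iff.1 hi) hin
    subst hin'
    have e1 : (if i ≤ i then p i else w) = p i := if_pos le_rfl
    have e2 : (if i + 1 ≤ i then p (i+1) else w) = w := if_neg (by omega)
    simp only [e1, e2, if_neg (lt_irrefl i)]
    exact ⟨h₀, h₁, h₂, h₃, h₄, h₅, h₆⟩

/-- Existence of chains between any two points of a connected open set. -/
lemma chain_exists [LocallyConnectedSpace Y] {W : Set Y} (hWo : IsOpen W)
    (hWc : IsPreconnected W) {x y : Y} (hx : x ∈ W) (hy : y ∈ W) {ε : ℝ} (hε : 0 < ε) :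
    ∃ n p V, p 0 = x ∧ p n = y ∧ Chn W ε n p V := by
  set S : Set Y := {z | z ∈ W ∧ ∃ n p V, p 0 = x ∧ p n = z ∧ Chn W ε n p V} with hS
  -- basic neighborhoods
  have nbhd : ∀ z ∈ W, ∃ V₀ : Set Y, IsOpen V₀ ∧ IsPreconnected V₀ ∧ z ∈ V₀ ∧ V₀ ⊆ W ∧
      V₀ ⊆ ball z (ε/2) := by
    intro z hz
    have : W ∩ ball z (ε/2) ∈ nhds z :=
      Filter.inter_mem (hWo.mem_nhds hz) (ball_mem_nhds z (by linarith))
    rcases exists_conn_nbhd this with ⟨V₀, h₀, h₁, h₂, h₃⟩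
    exact ⟨V₀, h₀, h₁, h₂, h₃.trans inter_subset_left, h₃.trans inter_subset_right⟩
  -- moving within such a neighborhood preserves membership in S, both ways
  have move : ∀ z ∈ W, ∀ V₀ : Set Y, IsOpen V₀ → IsPreconnected V₀ → z ∈ V₀ → V₀ ⊆ W →
      V₀ ⊆ ball z (ε/2) → ∀ u ∈ V₀, ∀ v ∈ V₀, u ∈ S → v ∈ S := by
    intro z hz V₀ h₀ h₁ h₂ h₃ h₄ u hu v hv huS
    rcases huS.2 with ⟨n, p, V, hp0, hpn, hch⟩
    subst hpn
    have hballu : V₀ ⊆ ball (p n) ε := fun w hw => by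
      have h1 := h₄ hw; have h2 := h₄ hu
      rw [mem_ball] at h1 h2 ⊢
      have := dist_triangle w z (p n)
      rw [dist_comm z (p n)] at this
      linarith
    have hballv : V₀ ⊆ ball v ε := fun w hw => by
      have h1 := h₄ hw; have h2 := h₄ hv
      rw [mem_ball] at h1 h2 ⊢
      have := dist_triangle w z v
      rw [dist_comm z v] at this
      linarith
    refine ⟨h₃ hv, n+1, _, _, ?_, ?_, hch.append h₀ h₁ h₃ hu hv hballu hballv⟩
    · simpa using hp0
    · simp
  have hSopen : IsOpen S := by
    rw [isOpen_iff_mem_nhds]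
    intro z hzS
    rcases nbhd z hzS.1 with ⟨V₀, h₀, h₁, h₂, h₃, h₄⟩
    refine Filter.mem_of_superset (h₀.mem_nhds h₂) ?_
    intro v hv
    exact move z hzS.1 V₀ h₀ h₁ h₂ h₃ h₄ z h₂ v hv hzS
  have hTopen : IsOpen {z | z ∈ W ∧ z ∉ S} := by
    rw [isOpen_iff_mem_nhds]
    intro z hz
    rcases nbhd z hz.1 with ⟨V₀, h₀, h₁, h₂, h₃, h₄⟩
    refine Filter.mem_of_superset (h₀.mem_nhds h₂) ?_
    intro v hv
    refine ⟨h₃ hv, fun hvS => hz.2 ?_⟩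
    exact move z hz.1 V₀ h₀ h₁ h₂ h₃ h₄ v hv z h₂ hvS
  have hxS : x ∈ S := ⟨hx, 0, (fun _ => x), (fun _ => ∅), rfl, rfl, fun i hi => by omega⟩
  by_cases hyS : y ∈ S
  · rcases hyS.2 with ⟨n, p, V, h1, h2, h3⟩; exact ⟨n, p, V, h1, h2, h3⟩
  · exfalso
    have hsub : W ⊆ S ∪ {z | z ∈ W ∧ z ∉ S} := by
      intro z hz
      by_cases h : z ∈ S
      · exact Or.inl h
      · exact Or.inr ⟨hz, h⟩
    rcases hWc S _ hSopen hTopen hsub ⟨x, hx, hxS⟩ ⟨y, hy, hy, hyS⟩ with ⟨z, _, hz1, _, hz2⟩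
    exact hz2 hz1


/-- All points of a chain lie in `W` (given the right endpoint is in `W`). -/
lemma chain_mem {W : Set Y} {ε : ℝ} {n : ℕ} {p : ℕ → Y} {V : ℕ → Set Y}
    (h : Chn W ε n p V) (hend : p n ∈ W) : ∀ i ≤ n, p i ∈ W := by
  intro i hi
  rcases eq_or_lt_of_le hi with rfl | hi
  · exact hend
  · exact (h i hi).2.2.1 (h i hi).2.2.2.1

/-- Chains can be padded to arbitrary length. -/
lemma chain_pad [LocallyConnectedSpace Y] {W : Set Y} (hWo : IsOpen W) {x y : Y}
    {ε : ℝ} (hε : 0 < ε) (hy : y ∈ W) {n : ℕ}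
    (h : ∃ p V, p 0 = x ∧ p n = y ∧ Chn W ε n p V) :
    ∀ m, n ≤ m → ∃ p V, p 0 = x ∧ p m = y ∧ Chn W ε m p V := by
  intro m hm
  induction m, hm using Nat.le_induction with
  | base => exact h
  | succ m hm ih =>
    rcases ih with ⟨p, V, h0, h1, hch⟩
    have : W ∩ ball y ε ∈ nhds y :=
      Filter.inter_mem (hWo.mem_nhds hy) (ball_mem_nhds y hε)
    rcases exists_conn_nbhd this with ⟨V₀, hV₀o, hV₀c, hyV₀, hV₀sub⟩
    have hV₀W : V₀ ⊆ W := hV₀sub.trans inter_subset_left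
    have hV₀b : V₀ ⊆ ball y ε := hV₀sub.trans inter_subset_right
    refine ⟨_, _, ?_, ?_, hch.append hV₀o hV₀c hV₀W (h1 ▸ hyV₀) hyV₀ (h1 ▸ hV₀b) hV₀b⟩
    · simpa using h0
    · simp [h1]

/-- Level data: a chain from `a` to `b` inside `U` with links of radius `ε`. -/
structure CD (U : Set Y) (a b : Y) (ε : ℝ) where
  N : ℕ
  p : ℕ → Y
  V : ℕ → Set Y
  hN : 1 ≤ N
  ha : p 0 = a
  hb : p N = b
  chain : Chn U ε N p V

lemma CD.mem {U : Set Y} {a b : Y} {ε : ℝ} (L : CD U a b ε) (hb : b ∈ U) :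
    ∀ i ≤ L.N, L.p i ∈ U :=
  chain_mem L.chain (by rw [L.hb]; exact hb)

/-- Refinement step: a chain can be refined at any smaller scale, with uniform
block length `m`. -/
lemma exists_step [LocallyConnectedSpace Y] {U : Set Y} {a b : Y} {ε δ : ℝ}
    (hδ : 0 < δ) (L : CD U a b ε) :
    ∃ L' : CD U a b δ, ∃ m, 1 ≤ m ∧ L'.N = m * L.N ∧
      ∀ k < L'.N, L'.p k ∈ L.V (k / m) := by
  classical
  -- a chain of some length in each link
  have H : ∀ i, ∃ n, i < L.N → ∃ p V, p 0 = L.p i ∧ p n = L.p (i+1) ∧ Chn (L.V i) δ n p V := by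
    intro i
    by_cases hi : i < L.N
    · obtain ⟨ho, hc, _, hmi, hmi1, _, _⟩ := L.chain i hi
      rcases chain_exists ho hc hmi hmi1 hδ with ⟨n, p, V, h⟩
      exact ⟨n, fun _ => ⟨p, V, h⟩⟩
    · exact ⟨0, fun h => absurd h hi⟩
  choose l hl using H
  set m : ℕ := (Finset.range L.N).sup l + 1 with hm
  have hm1 : 1 ≤ m := Nat.le_add_left 1 _
  have hlm : ∀ i < L.N, l i ≤ m := fun i hi =>
    le_trans (Finset.le_sup (Finset.mem_range.2 hi)) (Nat.le_succ _)
  -- pad each to length exactly m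
  have H2 : ∀ i, ∃ q R, i < L.N → q 0 = L.p i ∧ q m = L.p (i+1) ∧ Chn (L.V i) δ m q R := by
    intro i
    by_cases hi : i < L.N
    · obtain ⟨ho, hc, _, hmi, hmi1, _, _⟩ := L.chain i hi
      rcases chain_pad ho hδ hmi1 (hl i hi) m (hlm i hi) with ⟨q, R, h⟩
      exact ⟨q, R, fun _ => h⟩
    · exact ⟨fun _ => a, fun _ => ∅, fun h => absurd h hi⟩
  choose q R hq using H2
  -- assemble
  set p' : ℕ → Y := fun k => if k / m < L.N then q (k / m) (k % m) else b with hp'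
  set V' : ℕ → Set Y := fun k => R (k / m) (k % m) with hV'
  have key : ∀ k < m * L.N, p' k = q (k / m) (k % m) ∧ k / m < L.N ∧ k % m < m := by
    intro k hk
    have h1 : k / m < L.N := Nat.div_lt_of_lt_mul hk
    exact ⟨if_pos h1, h1, Nat.mod_lt _ hm1⟩
  have keysucc : ∀ k < m * L.N, p' (k+1) = q (k / m) (k % m + 1) := by
    intro k hk
    obtain ⟨-, hi, hj⟩ := key k hk
    obtain ⟨i, j, hij, hjm⟩ : ∃ i j, k = m * i + j ∧ j < m :=
      ⟨k / m, k % m, (Nat.div_add_mod k m).symm, hj⟩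
    have hdiv : k / m = i := by
      subst hij
      rw [Nat.mul_add_div (by omega), Nat.div_eq_of_lt hjm, Nat.add_zero]
    have hmod : k % m = j := by
      subst hij
      rw [Nat.mul_add_mod, Nat.mod_eq_of_lt hjm]
    have hiN : i < L.N := lt_of_eq_of_lt hdiv.symm hi
    rw [hdiv, hmod]
    rcases lt_or_eq_of_le (Nat.succ_le_of_lt hjm) with hjm1 | hjm1
    · -- j+1 < m : same block
      have e1 : (k+1) / m = i := by
        subst hij
        rw [Nat.add_assoc, Nat.mul_add_div (by omega), Nat.div_eq_of_lt hjm1, Nat.add_zero]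
      have e2 : (k+1) % m = j + 1 := by
        subst hij
        rw [Nat.add_assoc, Nat.mul_add_mod, Nat.mod_eq_of_lt hjm1]
      simp only [hp', e1, e2, if_pos hiN]
    · -- j+1 = m : go to next block, both are L.p (i+1)
      have hk1 : k + 1 = m * (i+1) := by rw [Nat.mul_add, Nat.mul_one]; omega
      have hqm : q i m = L.p (i+1) := (hq i hiN).2.1
      rcases lt_or_ge (i+1) L.N with hi1 | hi1
      · have e1 : (k+1) / m = i + 1 := by rw [hk1, Nat.mul_div_cancel_left _ (by omega)]
        have e2 : (k+1) % m = 0 := by rw [hk1, Nat.mul_mod_right]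
        simp only [hp', e1, e2, if_pos hi1]
        rw [(hq (i+1) hi1).1, show j + 1 = m by omega, hqm]
      · have hiN1 : i + 1 = L.N := by omega
        have e1 : ¬ ((k+1) / m < L.N) := by
          rw [hk1, Nat.mul_div_cancel_left _ (by omega)]; omega
        simp only [hp', if_neg e1]
        have : q i (j+1) = b := by rw [show j + 1 = m by omega, hqm, hiN1, L.hb]
        exact this.symm
  refine ⟨⟨m * L.N, p', V', Nat.mul_pos hm1 L.hN, ?_, ?_, ?_⟩, m, hm1, rfl, ?_⟩
  · -- p' 0 = a
    have h0 : (0:ℕ) / m < L.N := by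
      rw [Nat.zero_div]; exact lt_of_lt_of_le Nat.zero_lt_one L.hN
    simp only [hp', Nat.zero_div, Nat.zero_mod, if_pos h0]
    rw [(hq 0 (lt_of_lt_of_le Nat.zero_lt_one L.hN)).1, L.ha]
  · -- p' (m * N) = b
    have : ¬ ((m * L.N) / m < L.N) := by
      rw [Nat.mul_div_cancel_left _ (by omega)]; omega
    simp only [hp', if_neg this]
  · -- chain property
    intro k hk
    obtain ⟨e0, hi, hj⟩ := key k hk
    have e1 := keysucc k hk
    have hch := (hq (k/m) hi).2.2 (k % m) hj
    rw [e0, e1]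
    obtain ⟨c1, c2, c3, c4, c5, c6, c7⟩ := hch
    exact ⟨c1, c2, c3.trans (L.chain _ hi).2.2.1, c4, c5, c6, c7⟩
  · -- membership in coarse links
    intro k hk
    obtain ⟨e0, hi, hj⟩ := key k hk
    show p' k ∈ L.V (k / m)
    rw [e0]
    have hch := (hq (k/m) hi).2.2 (k % m) hj
    exact hch.2.2.1 hch.2.2.2.1


noncomputable def seqCD [LocallyConnectedSpace Y] {U : Set Y} {a b : Y}
    (L0 : CD U a b ((2:ℝ)⁻¹ ^ 0)) : ∀ n : ℕ, CD U a b ((2:ℝ)⁻¹ ^ n)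
  | 0 => L0
  | n+1 => (exists_step (by positivity) (seqCD L0 n)).choose

lemma seqCD_compat [LocallyConnectedSpace Y] {U : Set Y} {a b : Y}
    (L0 : CD U a b ((2:ℝ)⁻¹ ^ 0)) (n : ℕ) :
    ∃ m, 1 ≤ m ∧ (seqCD L0 (n+1)).N = m * (seqCD L0 n).N ∧
      ∀ k < (seqCD L0 (n+1)).N, (seqCD L0 (n+1)).p k ∈ (seqCD L0 n).V (k / m) := by
  have := (exists_step (U := U) (a := a) (b := b)
    (δ := (2:ℝ)⁻¹ ^ (n+1)) (by positivity) (seqCD L0 n)).choose_spec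
  exact this

/-- Mazurkiewicz–Moore: in a complete, locally connected metric space, any two
points of a connected open set `U` are joined by a path within `closure U`. -/
lemma exists_path_closure [LocallyConnectedSpace Y] [CompleteSpace Y] {U : Set Y}
    (hUo : IsOpen U) (hUc : IsPreconnected U) {a b : Y} (ha : a ∈ U) (hb : b ∈ U) :
    ∃ γ : Path a b, Set.range γ ⊆ closure U := by
  classical
  -- initial chain
  obtain ⟨n₀, p₀, V₀, hp₀⟩ := chain_exists hUo hUc ha hb one_pos
  obtain ⟨p₁, V₁, h10, h11, h1c⟩ :=
    chain_pad hUo one_pos hb ⟨p₀, V₀, hp₀⟩ (max n₀ 1) (le_max_left _ _)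
  have e0 : ((2:ℝ)⁻¹) ^ 0 = 1 := pow_zero _
  have L0 : CD U a b ((2:ℝ)⁻¹ ^ 0) :=
    ⟨max n₀ 1, p₁, V₁, le_max_right _ _, h10, h11, by rw [e0]; exact h1c⟩
  set A : ∀ n : ℕ, CD U a b ((2:ℝ)⁻¹ ^ n) := seqCD L0 with hA
  have Npos : ∀ n, 0 < (A n).N := fun n => (A n).hN
  set h : ℕ → ℝ → Y := fun n t => (A n).p ⌊t * (A n).N⌋₊ with hh
  have hmemU : ∀ n, ∀ t ∈ Set.Icc (0:ℝ) 1, h n t ∈ U := by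
    intro n t ⟨ht0, ht1⟩
    refine (A n).mem hb _ ?_
    have : t * (A n).N ≤ ((A n).N : ℝ) := by
      nlinarith [(Nat.cast_pos (α := ℝ)).2 (Npos n)]
    calc ⌊t * (A n).N⌋₊ ≤ ⌊((A n).N : ℝ)⌋₊ := Nat.floor_le_floor this
      _ = (A n).N := Nat.floor_natCast _
  have hone : ∀ n, h n 1 = b := by
    intro n
    simp only [hh, one_mul, Nat.floor_natCast, (A n).hb]
  have hzero : ∀ n, h n 0 = a := by
    intro n
    simp only [hh, zero_mul, Nat.floor_zero, (A n).ha]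
  -- E1 : consecutive levels are close
  have E1 : ∀ n, ∀ t ∈ Set.Icc (0:ℝ) 1, dist (h (n+1) t) (h n t) ≤ (2:ℝ)⁻¹ ^ n := by
    intro n t ⟨ht0, ht1⟩
    rcases eq_or_lt_of_le ht1 with rfl | ht1
    · rw [hone, hone, dist_self]; positivity
    · obtain ⟨m, hm1, hmN, hmem⟩ := seqCD_compat L0 n
      set N := (A n).N with hN
      set i := ⌊t * N⌋₊ with hi
      set k := ⌊t * (A (n+1)).N⌋₊ with hk
      have hNpos : (0:ℝ) < N := Nat.cast_pos.2 (Npos n)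
      have htN : 0 ≤ t * N := by positivity
      have hiN : i < N := by
        rw [hi, Nat.floor_lt htN]
        exact mul_lt_of_lt_one_left hNpos ht1
      have hfl : (i:ℝ) ≤ t * N := Nat.floor_le htN
      have hfu : t * N < i + 1 := Nat.lt_floor_add_one _
      have hk1 : m * i ≤ k := by
        rw [hk, hmN]
        refine Nat.le_floor ?_
        push_cast
        nlinarith [(Nat.cast_pos (α := ℝ)).2 (Nat.lt_of_lt_of_le Nat.zero_lt_one hm1)]
      have hk2 : k < m * (i+1) := by
        rw [hk, hmN, Nat.floor_lt (by positivity)]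
        push_cast
        nlinarith [(Nat.cast_pos (α := ℝ)).2 (Nat.lt_of_lt_of_le Nat.zero_lt_one hm1)]
      have hdiv : k / m = i := by
        refine Nat.div_eq_of_lt_le ?_ ?_
        · rwa [Nat.mul_comm]
        · rwa [Nat.mul_comm]
      have hkN : k < (A (n+1)).N := by
        rw [hmN]
        exact lt_of_lt_of_le hk2 (Nat.mul_le_mul_left m hiN)
      have hmem' := hmem k hkN
      rw [hdiv] at hmem'
      have hball := ((A n).chain i hiN).2.2.2.2.2.1
      exact le_of_lt (mem_ball.1 (hball hmem'))
  -- E2 : modulus of continuity at each level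
  have E2 : ∀ n, ∀ s ∈ Set.Icc (0:ℝ) 1, ∀ t ∈ Set.Icc (0:ℝ) 1, s ≤ t →
      t - s ≤ 1 / (A n).N → dist (h n t) (h n s) ≤ (2:ℝ)⁻¹ ^ n := by
    intro n s ⟨hs0, hs1⟩ t ⟨ht0, ht1⟩ hst hd
    set N := (A n).N with hN
    have hNpos : (0:ℝ) < N := Nat.cast_pos.2 (Npos n)
    set i := ⌊s * N⌋₊ with hi
    set j := ⌊t * N⌋₊ with hj
    have hij : i ≤ j := Nat.floor_le_floor (by nlinarith)
    have hji : j ≤ i + 1 := by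
      have h1 : t * N ≤ s * N + 1 := by
        have : (t - s) * N ≤ 1 := by
          calc (t - s) * N ≤ (1 / N) * N := by nlinarith
            _ = 1 := by field_simp
        nlinarith
      calc j ≤ ⌊s * N + 1⌋₊ := Nat.floor_le_floor h1
        _ = i + 1 := by rw [Nat.floor_add_one (by positivity)]
    have hjN : j ≤ N := by
      have : t * N ≤ (N:ℝ) := by nlinarith
      calc j ≤ ⌊(N:ℝ)⌋₊ := Nat.floor_le_floor this
        _ = N := Nat.floor_natCast _
    rcases eq_or_lt_of_le hij with hij' | hij'
    · rw [hh]
      simp only [← hN, ← hi, ← hj, ← hij', dist_self]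
      positivity
    · have hj' : j = i + 1 := le_antisymm hji hij'
      have hiN : i < N := by omega
      have hc := (A n).chain i hiN
      have := hc.2.2.2.2.2.1 hc.2.2.2.2.1
      rw [hh]
      simp only [← hN, ← hi, ← hj, hj']
      exact le_of_lt (mem_ball.1 this)
  -- Cauchy and limits
  have hCauchy : ∀ t ∈ Set.Icc (0:ℝ) 1, ∃ c, Filter.Tendsto (fun n => h n t)
      Filter.atTop (nhds c) := by
    intro t ht
    refine cauchySeq_tendsto_of_complete ?_
    refine cauchySeq_of_le_geometric (2:ℝ)⁻¹ 1 (by norm_num) (fun n => ?_)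
    rw [dist_comm, one_mul]
    exact E1 n t ht
  set g : ℝ → Y := fun t =>
    if hex : ∃ c, Filter.Tendsto (fun n => h n t) Filter.atTop (nhds c) then hex.choose
    else b with hg
  have hgt : ∀ t ∈ Set.Icc (0:ℝ) 1,
      Filter.Tendsto (fun n => h n t) Filter.atTop (nhds (g t)) := by
    intro t ht
    have hex := hCauchy t ht
    rw [hg]
    simp only [dif_pos hex]
    exact hex.choose_spec
  -- distance from g to the approximations
  have hdistg : ∀ t ∈ Set.Icc (0:ℝ) 1, ∀ n, dist (g t) (h n t) ≤ 2 * (2:ℝ)⁻¹ ^ n := by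
    intro t ht n
    have key : ∀ M, dist (h (n+M) t) (h n t) ≤ 2 * (2:ℝ)⁻¹ ^ n - 2 * (2:ℝ)⁻¹ ^ (n+M) := by
      intro M
      induction M with
      | zero => simp
      | succ M ih =>
        have h1 := E1 (n+M) t ht
        calc dist (h (n+M+1) t) (h n t)
            ≤ dist (h (n+M+1) t) (h (n+M) t) + dist (h (n+M) t) (h n t) := dist_triangle _ _ _
          _ ≤ (2:ℝ)⁻¹ ^ (n+M) + (2 * (2:ℝ)⁻¹ ^ n - 2 * (2:ℝ)⁻¹ ^ (n+M)) := by
              have := E1 (n+M) t ht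
              exact add_le_add this ih
          _ = 2 * (2:ℝ)⁻¹ ^ n - 2 * (2:ℝ)⁻¹ ^ (n+M+1) := by ring
    have htail : Filter.Tendsto (fun M => h (n+M) t) Filter.atTop (nhds (g t)) := by
      have := (hgt t ht).comp (Filter.tendsto_add_atTop_nat n)
      simpa [Function.comp_def, Nat.add_comm] using this
    have htend : Filter.Tendsto (fun M => dist (h (n+M) t) (h n t)) Filter.atTop
        (nhds (dist (g t) (h n t))) := htail.dist tendsto_const_nhds
    refine le_of_tendsto htend (Filter.Eventually.of_forall fun M => ?_)
    have := key M
    have hpow : (0:ℝ) ≤ 2 * (2:ℝ)⁻¹ ^ (n+M) := by positivity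
    linarith
  -- continuity of g on the unit interval
  have hcont : Continuous fun t : unitInterval => g t := by
    rw [Metric.continuous_iff]
    intro s ε hε
    obtain ⟨n, hn⟩ := exists_pow_lt_of_lt_one (show (0:ℝ) < ε/5 by linarith)
      (by norm_num : (2:ℝ)⁻¹ < 1)
    refine ⟨1 / (A n).N, one_div_pos.2 (Nat.cast_pos.2 (Npos n)), fun t hts => ?_⟩
    have hts' : |(t:ℝ) - s| ≤ 1 / (A n).N := by
      rw [Subtype.dist_eq, Real.dist_eq] at hts
      exact le_of_lt hts
    have hsI : (s:ℝ) ∈ Set.Icc (0:ℝ) 1 := s.2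
    have htI : (t:ℝ) ∈ Set.Icc (0:ℝ) 1 := t.2
    have hmid : dist (h n t) (h n s) ≤ (2:ℝ)⁻¹ ^ n := by
      rcases le_total (s:ℝ) (t:ℝ) with hle | hle
      · exact E2 n s hsI t htI hle (by rw [abs_sub_comm] at hts'; linarith [abs_le.1 hts'])
      · rw [dist_comm]
        exact E2 n t htI s hsI hle (by linarith [abs_le.1 hts'])
    calc dist (g t) (g s) ≤ dist (g t) (h n t) + dist (h n t) (h n s) + dist (h n s) (g s) := 
          dist_triangle4 _ _ _ _
      _ ≤ 2 * (2:ℝ)⁻¹ ^ n + (2:ℝ)⁻¹ ^ n + 2 * (2:ℝ)⁻¹ ^ n := by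
          have h1 := hdistg t htI n
          have h2 := hdistg s hsI n
          rw [dist_comm (h n s) (g s)] at *
          exact add_le_add (add_le_add h1 hmid) h2
      _ = 5 * (2:ℝ)⁻¹ ^ n := by ring
      _ < ε := by linarith
  have hg0 : g 0 = a := by
    have h1 := hgt 0 ⟨le_rfl, zero_le_one⟩
    have h2 : Filter.Tendsto (fun n => h n 0) Filter.atTop (nhds a) := by
      simp only [hzero]; exact tendsto_const_nhds
    exact tendsto_nhds_unique h1 h2
  have hg1 : g 1 = b := by
    have h1 := hgt 1 ⟨zero_le_one, le_rfl⟩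
    have h2 : Filter.Tendsto (fun n => h n 1) Filter.atTop (nhds b) := by
      simp only [hone]; exact tendsto_const_nhds
    exact tendsto_nhds_unique h1 h2
  refine ⟨⟨⟨fun t => g t, hcont⟩, by simpa using hg0, by simpa using hg1⟩, ?_⟩
  rintro x ⟨t, rfl⟩
  exact mem_closure_of_tendsto (hgt t t.2)
    (Filter.Eventually.of_forall fun n => hmemU n t t.2)


/-- In a connected, locally connected metric space, every point of the space lies in the
connected component of `y₀` in some large ball around `y₀`. -/
lemma mem_component_ball [LocallyConnectedSpace Y] [ConnectedSpace Y] (y₀ : Y) :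
    ∀ z : Y, ∃ R : ℕ, z ∈ connectedComponentIn (ball y₀ R) y₀ := by
  set T : Set Y := ⋃ R : ℕ, connectedComponentIn (ball y₀ R) y₀ with hT
  have hTopen : IsOpen T :=
    isOpen_iUnion fun R => isOpen_ball.connectedComponentIn
  have hTclosed : IsClosed T := by
    rw [← closure_eq_iff_isClosed]
    refine Set.Subset.antisymm ?_ subset_closure
    intro z hz
    have hnb : ball z 1 ∈ nhds z := ball_mem_nhds z one_pos
    rcases exists_conn_nbhd hnb with ⟨V, hVo, hVc, hzV, hVsub⟩
    rcases mem_closure_iff_nhds.1 hz (V) (hVo.mem_nhds hzV) with ⟨w, hwV, hwT⟩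
    rcases Set.mem_iUnion.1 hwT with ⟨R, hwR⟩
    -- choose a big radius containing both the component and V
    obtain ⟨R', hR'⟩ := exists_nat_gt (max (R:ℝ) (dist z y₀ + 1))
    have hRR' : (R:ℝ) ≤ R' := le_trans (le_max_left _ _) hR'.le
    have hVball : V ⊆ ball y₀ R' := by
      intro v hv
      have h1 : dist v z < 1 := mem_ball.1 (hVsub hv)
      have h2 : dist z y₀ + 1 < R' := lt_of_le_of_lt (le_max_right _ _) hR'
      rw [mem_ball]
      calc dist v y₀ ≤ dist v z + dist z y₀ := dist_triangle _ _ _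
        _ < R' := by linarith
    have hcompball : connectedComponentIn (ball y₀ R) y₀ ⊆ ball y₀ R' :=
      (connectedComponentIn_subset _ _).trans (ball_subset_ball hRR')
    have hy₀mem : y₀ ∈ connectedComponentIn (ball y₀ R) y₀ := by
      have hne : (connectedComponentIn (ball y₀ R) y₀).Nonempty := ⟨w, hwR⟩
      exact mem_connectedComponentIn (connectedComponentIn_nonempty_iff.1 hne)
    have hunion : IsPreconnected (V ∪ connectedComponentIn (ball y₀ R) y₀) :=
      IsPreconnected.union w hwV hwR hVc isPreconnected_connectedComponentIn
    have hsub : V ∪ connectedComponentIn (ball y₀ R) y₀ ⊆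
        connectedComponentIn (ball y₀ R') y₀ :=
      hunion.subset_connectedComponentIn (Or.inr hy₀mem) (Set.union_subset hVball hcompball)
    exact Set.mem_iUnion.2 ⟨R', hsub (Or.inl hzV)⟩
  have hTuniv : T = Set.univ := by
    refine IsClopen.eq_univ ⟨hTclosed, hTopen⟩ ⟨y₀, ?_⟩
    refine Set.mem_iUnion.2 ⟨1, mem_connectedComponentIn ?_⟩
    simpa using mem_ball_self one_pos
  intro z
  have : z ∈ T := hTuniv ▸ Set.mem_univ z
  exact Set.mem_iUnion.1 this

end Stmt12Aux

open Stmt12Aux in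
/-- Corollary 7.3: with a group `G` acting by isometries on a proper,
connected, locally connected metric space `Y`, the constant `M` of Lemma 7.2
can be chosen uniformly over the orbit of `y₀`: any two points of `B(y, D)`
with `y ∈ G • y₀` can be joined by a path inside `B(y, M)`. -/
theorem stmt12 {G Y : Type*} [Group G] [MetricSpace Y] [ProperSpace Y]
    [ConnectedSpace Y] [LocallyConnectedSpace Y] [MulAction G Y]
    (hiso : ∀ (g : G) (x y : Y), dist (g • x) (g • y) = dist x y)
    (y₀ : Y) (D : ℝ) (hD : 0 < D) :
    ∃ M : ℝ, 0 < M ∧ ∀ y ∈ MulAction.orbit G y₀,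
      ∀ a b : Y, a ∈ Metric.ball y D → b ∈ Metric.ball y D →
        ∃ γ : Path a b, Set.range γ ⊆ Metric.ball y M := by
  classical
  -- a single large connected open set containing the closed ball of radius D
  have hcomp := mem_component_ball y₀
  have hK : IsCompact (closedBall y₀ D) := isCompact_closedBall y₀ D
  have hmono : ∀ (R S : ℕ), R ≤ S →
      connectedComponentIn (ball y₀ R) y₀ ⊆ connectedComponentIn (ball y₀ S) y₀ :=
    fun R S hRS => connectedComponentIn_mono _ (ball_subset_ball (by exact_mod_cast hRS))
  have hcover : closedBall y₀ D ⊆ ⋃ R : ℕ, connectedComponentIn (ball y₀ R) y₀ := by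
    intro z _
    rcases hcomp z with ⟨R, hR⟩
    exact Set.mem_iUnion.2 ⟨R, hR⟩
  obtain ⟨s, hs⟩ := hK.elim_finite_subcover _
    (fun R : ℕ => isOpen_ball.connectedComponentIn) hcover
  set R : ℕ := s.sup id + Nat.ceil D + 1 with hR
  have hKU : closedBall y₀ D ⊆ connectedComponentIn (ball y₀ R) y₀ := by
    intro z hz
    rcases Set.mem_iUnion₂.1 (hs hz) with ⟨r, hrs, hrz⟩
    refine hmono r R ?_ hrz
    have : r ≤ s.sup id := Finset.le_sup (f := id) hrs
    omega
  set U : Set Y := connectedComponentIn (ball y₀ R) y₀ with hU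
  have hUo : IsOpen U := isOpen_ball.connectedComponentIn
  have hUc : IsPreconnected U := isPreconnected_connectedComponentIn
  have hUball : U ⊆ ball y₀ R := connectedComponentIn_subset _ _
  refine ⟨R + 1, by positivity, ?_⟩
  rintro y ⟨g, rfl⟩ a b ha hb
  -- pull back to the base point
  have hisog : Isometry fun x : Y => g • x := Isometry.of_dist_eq fun x z => hiso g x z
  have hainv : g⁻¹ • a ∈ ball y₀ D := by
    rw [mem_ball]
    have : dist (g • (g⁻¹ • a)) (g • y₀) = dist (g⁻¹ • a) y₀ := hiso g _ _
    rw [smul_inv_smul] at this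
    rw [← this]
    exact mem_ball.1 ha
  have hbinv : g⁻¹ • b ∈ ball y₀ D := by
    rw [mem_ball]
    have : dist (g • (g⁻¹ • b)) (g • y₀) = dist (g⁻¹ • b) y₀ := hiso g _ _
    rw [smul_inv_smul] at this
    rw [← this]
    exact mem_ball.1 hb
  have haU : g⁻¹ • a ∈ U := hKU (ball_subset_closedBall hainv)
  have hbU : g⁻¹ • b ∈ U := hKU (ball_subset_closedBall hbinv)
  obtain ⟨γ₀, hγ₀⟩ := exists_path_closure hUo hUc haU hbU
  have hclos : closure U ⊆ closedBall y₀ R :=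
    closure_minimal (hUball.trans ball_subset_closedBall) isClosed_closedBall
  -- transport the path by the isometry
  refine ⟨(γ₀.map hisog.continuous).cast (by rw [smul_inv_smul]) (by rw [smul_inv_smul]), ?_⟩
  rintro x ⟨t, rfl⟩
  have hmem : γ₀ t ∈ closedBall y₀ R := hclos (hγ₀ ⟨t, rfl⟩)
  have : dist (g • γ₀ t) (g • y₀) = dist (γ₀ t) y₀ := hiso g _ _
  simp only [Path.cast_coe, Path.map_coe, Function.comp_apply, mem_ball]
  rw [this]
  have := mem_closedBall.1 hmem
  linarith
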